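/- Let p, q, r > 1 satisfy 1/p + 1/q = 1 + 1/r. For f ∈ L^p(ℝ) and g ∈ L^q(ℝ), the Hartley convolution f ∗_{H₁} g belongs to L^r(ℝ) and ‖f ∗_{H₁} g‖_{L^r(ℝ)} ≤ √(2/π) ‖f‖_{L^p(ℝ)} ‖g‖_{L^q(ℝ)}. -/

import Mathlib

open MeasureTheory Real Complex Filter Topology

open scoped ENNReal

lemma enn_split {p q a b c : ℝ} (hpab : p * a + p * b = 1) (hqac : q * a + q * c = 1)
    (ha : 0 ≤ a) (hpa : 0 ≤ p * a) (hpb : 0 ≤ p * b) (hqa : 0 ≤ q * a) (hqc : 0 ≤ q * c)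
    (u v : ℝ≥0∞) :
    u * v = (u ^ p * v ^ q) ^ a * ((u ^ p) ^ b * ((v ^ q) ^ c)) := by
  rw [ENNReal.mul_rpow_of_nonneg _ _ ha, ← ENNReal.rpow_mul, ← ENNReal.rpow_mul,
    ← ENNReal.rpow_mul, ← ENNReal.rpow_mul]
  calc u * v = u ^ (p * a + p * b) * v ^ (q * a + q * c) := by
        rw [hpab, hqac, ENNReal.rpow_one, ENNReal.rpow_one]
    _ = (u ^ (p * a) * v ^ (q * a)) * (u ^ (p * b) * (v ^ (q * c))) := by
        rw [ENNReal.rpow_add_of_nonneg _ _ hpa hpb, ENNReal.rpow_add_of_nonneg _ _ hqa hqc]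
        ring

theorem young_aux (p q r : ℝ) (hp : 1 < p) (hq : 1 < q) (hr : 1 < r)
    (hpqr : 1 / p + 1 / q = 1 + 1 / r)
    (f g : ℝ → ℂ) (hfm : Measurable f) (hgm : Measurable g)
    (hf : MemLp f (ENNReal.ofReal p)) (hg : MemLp g (ENNReal.ofReal q)) :
    (∀ᵐ x : ℝ, Integrable (fun y ↦ f y * g (x - y))) ∧
    MemLp (fun x ↦ ∫ y : ℝ, f y * g (x - y)) (ENNReal.ofReal r) ∧
    eLpNorm (fun x ↦ ∫ y : ℝ, f y * g (x - y)) (ENNReal.ofReal r) volume ≤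
      eLpNorm f (ENNReal.ofReal p) volume * eLpNorm g (ENNReal.ofReal q) volume := by
  have hp0 : (0:ℝ) < p := by linarith
  have hq0 : (0:ℝ) < q := by linarith
  have hr0 : (0:ℝ) < r := by linarith
  set a : ℝ := 1 / r with ha_def
  set b : ℝ := 1 - 1 / q with hb_def
  set c : ℝ := 1 - 1 / p with hc_def
  have ha : 0 < a := by positivity
  have hq1 : 1 / q < 1 := by rw [div_lt_one hq0]; exact hq
  have hp1 : 1 / p < 1 := by rw [div_lt_one hp0]; exact hp
  have hb : 0 < b := by rw [hb_def]; linarith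
  have hc : 0 < c := by rw [hc_def]; linarith
  have hab : a + b = 1 / p := by
    have : 1 / r = 1 / p + 1 / q - 1 := by linarith
    rw [ha_def, hb_def, this]; ring
  have hac : a + c = 1 / q := by
    have : 1 / r = 1 / p + 1 / q - 1 := by linarith
    rw [ha_def, hc_def, this]; ring
  have habc : a + b + c = 1 := by
    have : a + b + c = a + 2 - (1/p + 1/q) := by rw [hb_def, hc_def]; ring
    rw [this, hpqr]; ring
  have hpab : p * a + p * b = 1 := by
    have : p * a + p * b = p * (a + b) := by ring
    rw [this, hab, mul_one_div, div_self hp0.ne']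
  have hqac : q * a + q * c = 1 := by
    have : q * a + q * c = q * (a + c) := by ring
    rw [this, hac, mul_one_div, div_self hq0.ne']
  -- enorm-valued functions
  set F : ℝ → ℝ≥0∞ := fun y ↦ (‖f y‖₊ : ℝ≥0∞) with hF_def
  set G : ℝ → ℝ≥0∞ := fun y ↦ (‖g y‖₊ : ℝ≥0∞) with hG_def
  have hFm : Measurable F := hfm.nnnorm.coe_nnreal_ennreal
  have hGm : Measurable G := hgm.nnnorm.coe_nnreal_ennreal
  set A : ℝ≥0∞ := ∫⁻ y, F y ^ p with hA_def
  set B : ℝ≥0∞ := ∫⁻ y, G y ^ q with hB_def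
  have hop0 : ENNReal.ofReal p ≠ 0 := by simp [ENNReal.ofReal_eq_zero]; linarith
  have hoq0 : ENNReal.ofReal q ≠ 0 := by simp [ENNReal.ofReal_eq_zero]; linarith
  have hor0 : ENNReal.ofReal r ≠ 0 := by simp [ENNReal.ofReal_eq_zero]; linarith
  have heLf : eLpNorm f (ENNReal.ofReal p) volume = A ^ (1 / p) := by
    rw [eLpNorm_eq_lintegral_rpow_enorm_toReal hop0 ENNReal.ofReal_ne_top,
      ENNReal.toReal_ofReal hp0.le]
    rfl
  have heLg : eLpNorm g (ENNReal.ofReal q) volume = B ^ (1 / q) := by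
    rw [eLpNorm_eq_lintegral_rpow_enorm_toReal hoq0 ENNReal.ofReal_ne_top,
      ENNReal.toReal_ofReal hq0.le]
    rfl
  have hA_lt : A < ∞ := by
    have h1 : A ^ (1/p) < ∞ := heLf ▸ hf.2
    have : A = (A ^ (1/p)) ^ p := by
      rw [← ENNReal.rpow_mul, one_div, inv_mul_cancel₀ hp0.ne', ENNReal.rpow_one]
    rw [this]
    exact ENNReal.rpow_lt_top_of_nonneg hp0.le h1.ne
  have hB_lt : B < ∞ := by
    have h1 : B ^ (1/q) < ∞ := heLg ▸ hg.2
    have : B = (B ^ (1/q)) ^ q := by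
      rw [← ENNReal.rpow_mul, one_div, inv_mul_cancel₀ hq0.ne', ENNReal.rpow_one]
    rw [this]
    exact ENNReal.rpow_lt_top_of_nonneg hq0.le h1.ne
  set conv : ℝ → ℝ≥0∞ := fun x ↦ ∫⁻ y, F y * G (x - y) with hconv_def
  set Phi : ℝ → ℝ≥0∞ := fun x ↦ ∫⁻ y, F y ^ p * G (x - y) ^ q with hPhi_def
  have hconv_m : Measurable conv := by
    apply Measurable.lintegral_prod_right' (f := fun z : ℝ × ℝ ↦ F z.2 * G (z.1 - z.2))
    exact (hFm.comp measurable_snd).mul (hGm.comp measurable_sub)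
  have hPhi_m : Measurable Phi := by
    apply Measurable.lintegral_prod_right' (f := fun z : ℝ × ℝ ↦ F z.2 ^ p * G (z.1 - z.2) ^ q)
    exact ((hFm.comp measurable_snd).pow_const _).mul ((hGm.comp measurable_sub).pow_const _)
  -- step 1 : pointwise Hölder
  have step1 : ∀ x : ℝ, conv x ≤ Phi x ^ a * (A ^ b * B ^ c) := by
    intro x
    have hm1 : Measurable fun y ↦ G (x - y) := hGm.comp (measurable_const.sub measurable_id)
    have key : conv x = ∫⁻ y, (F y ^ p * G (x - y) ^ q) ^ a *
        ((F y ^ p) ^ b * ((G (x - y) ^ q) ^ c)) := by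
      refine lintegral_congr fun y ↦ ?_
      exact enn_split hpab hqac ha.le (by positivity) (by positivity) (by positivity)
        (by positivity) _ _
    rw [key]
    have H3 := ENNReal.lintegral_prod_norm_pow_le (μ := (volume : Measure ℝ))
      (Finset.univ : Finset (Fin 3))
      (f := ![fun y ↦ F y ^ p * G (x - y) ^ q, fun y ↦ F y ^ p, fun y ↦ G (x - y) ^ q])
      (p := ![a, b, c]) ?_ ?_ ?_
    · have e1 : (∫⁻ y, G (x - y) ^ q) = B := by
        rw [hB_def]
        exact (Measure.measurePreserving_sub_left volume x).lintegral_comp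
          (hGm.pow_const _)
      simp only [Fin.prod_univ_three] at H3
      simp only [Matrix.cons_val_zero, Matrix.cons_val_one, Matrix.head_cons,
        Matrix.cons_val_two, Matrix.tail_cons] at H3
      calc ∫⁻ y, (F y ^ p * G (x - y) ^ q) ^ a * ((F y ^ p) ^ b * ((G (x - y) ^ q) ^ c))
          ≤ (∫⁻ y, F y ^ p * G (x - y) ^ q) ^ a * ((∫⁻ y, F y ^ p) ^ b *
            (∫⁻ y, G (x - y) ^ q) ^ c) := by
            refine le_trans (le_of_eq ?_) (le_trans H3 (le_of_eq (by ring)))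
            refine lintegral_congr fun y ↦ ?_
            ring
        _ = Phi x ^ a * (A ^ b * B ^ c) := by rw [e1]
    · rintro i -
      fin_cases i
      · exact (((hFm.pow_const _).mul (hm1.pow_const _))).aemeasurable
      · exact (hFm.pow_const _).aemeasurable
      · exact (hm1.pow_const _).aemeasurable
    · simp [Fin.sum_univ_three, habc]
    · rintro i -
      fin_cases i
      · exact ha.le
      · exact hb.le
      · exact hc.le
  -- step 2 : raise to power r
  have step2 : ∀ x : ℝ, conv x ^ r ≤ Phi x * (A ^ (b * r) * B ^ (c * r)) := by
    intro x
    calc conv x ^ r ≤ (Phi x ^ a * (A ^ b * B ^ c)) ^ r :=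
          ENNReal.rpow_le_rpow (step1 x) hr0.le
      _ = Phi x * (A ^ (b * r) * B ^ (c * r)) := by
          rw [ENNReal.mul_rpow_of_nonneg _ _ hr0.le, ENNReal.mul_rpow_of_nonneg _ _ hr0.le,
            ← ENNReal.rpow_mul, ← ENNReal.rpow_mul, ← ENNReal.rpow_mul,
            show a * r = 1 by rw [ha_def]; field_simp, ENNReal.rpow_one]
  -- step 3 : integrate
  have hPhi_int : ∫⁻ x, Phi x = A * B := by
    rw [hPhi_def]
    rw [lintegral_lintegral_swap]
    · have e2 : ∀ y : ℝ, (∫⁻ x, F y ^ p * G (x - y) ^ q) = F y ^ p * B := by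
        intro y
        have hmy : Measurable fun x : ℝ ↦ G (x - y) ^ q :=
          (hGm.comp (measurable_id.sub measurable_const)).pow_const _
        rw [lintegral_const_mul _ hmy]
        congr 1
        rw [hB_def]
        exact (measurePreserving_sub_right volume y).lintegral_comp (hGm.pow_const _)
      simp_rw [e2]
      rw [lintegral_mul_const _ (hFm.pow_const _)]
    · exact (((hFm.comp measurable_snd).pow_const _).mul
        ((hGm.comp measurable_sub).pow_const _)).aemeasurable
  have step3 : ∫⁻ x, conv x ^ r ≤ A ^ (1 + b * r) * B ^ (1 + c * r) := by
    calc ∫⁻ x, conv x ^ r ≤ ∫⁻ x, Phi x * (A ^ (b * r) * B ^ (c * r)) :=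
          lintegral_mono step2
      _ = (A * B) * (A ^ (b * r) * B ^ (c * r)) := by
          rw [lintegral_mul_const _ hPhi_m, hPhi_int]
      _ = A ^ (1 + b * r) * B ^ (1 + c * r) := by
          rw [ENNReal.rpow_add_of_nonneg _ _ zero_le_one (by positivity),
            ENNReal.rpow_add_of_nonneg _ _ zero_le_one (by positivity),
            ENNReal.rpow_one, ENNReal.rpow_one]
          ring
  -- step 4: conclusions
  have hRHS_lt : A ^ (1 + b * r) * B ^ (1 + c * r) < ∞ :=
    ENNReal.mul_lt_top (ENNReal.rpow_lt_top_of_nonneg (by positivity) hA_lt.ne)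
      (ENNReal.rpow_lt_top_of_nonneg (by positivity) hB_lt.ne)
  have hconv_fin : ∀ᵐ x : ℝ, conv x < ∞ := by
    have h1 : ∀ᵐ x : ℝ, conv x ^ r < ∞ :=
      ae_lt_top (hconv_m.pow_const _) (lt_of_le_of_lt step3 hRHS_lt).ne
    filter_upwards [h1] with x hx
    by_contra h
    rw [not_lt, top_le_iff] at h
    rw [h, ENNReal.top_rpow_of_pos hr0] at hx
    exact lt_irrefl _ hx
  have hconv_eq : ∀ x : ℝ, (∫⁻ y, (‖f y * g (x - y)‖₊ : ℝ≥0∞)) = conv x := by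
    intro x
    simp only [hconv_def, hF_def, hG_def, nnnorm_mul, ENNReal.coe_mul]
  have hmeas_int : ∀ x : ℝ, AEStronglyMeasurable (fun y ↦ f y * g (x - y)) volume := fun x ↦
    ((hfm.mul (hgm.comp (measurable_const.sub measurable_id))).stronglyMeasurable).aestronglyMeasurable
  have hae_int : ∀ᵐ x : ℝ, Integrable (fun y ↦ f y * g (x - y)) := by
    filter_upwards [hconv_fin] with x hx
    refine ⟨hmeas_int x, ?_⟩
    show (∫⁻ y, (‖f y * g (x - y)‖₊ : ℝ≥0∞)) < ⊤
    rw [hconv_eq x]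
    exact hx
  have hbound : eLpNorm (fun x ↦ ∫ y, f y * g (x - y)) (ENNReal.ofReal r) volume ≤
      A ^ (1 / p) * B ^ (1 / q) := by
    rw [eLpNorm_eq_lintegral_rpow_enorm_toReal hor0 ENNReal.ofReal_ne_top,
      ENNReal.toReal_ofReal hr0.le]
    have hstep : ∀ x : ℝ, (‖∫ y, f y * g (x - y)‖₊ : ℝ≥0∞) ^ r ≤ conv x ^ r := by
      intro x
      refine ENNReal.rpow_le_rpow ?_ hr0.le
      calc (‖∫ y, f y * g (x - y)‖₊ : ℝ≥0∞) ≤ ∫⁻ y, (‖f y * g (x - y)‖₊ : ℝ≥0∞) :=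
            enorm_integral_le_lintegral_enorm _
        _ = conv x := hconv_eq x
    have he1 : (1 + b * r) * (1 / r) = a + b := by rw [ha_def]; field_simp
    have he2 : (1 + c * r) * (1 / r) = a + c := by rw [ha_def]; field_simp
    calc (∫⁻ x, (‖∫ y, f y * g (x - y)‖₊ : ℝ≥0∞) ^ r) ^ (1 / r)
        ≤ (∫⁻ x, conv x ^ r) ^ (1 / r) :=
          ENNReal.rpow_le_rpow (lintegral_mono hstep) (by positivity)
      _ ≤ (A ^ (1 + b * r) * B ^ (1 + c * r)) ^ (1 / r) :=
          ENNReal.rpow_le_rpow step3 (by positivity)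
      _ = A ^ (1 / p) * B ^ (1 / q) := by
          rw [ENNReal.mul_rpow_of_nonneg _ _ (by positivity), ← ENNReal.rpow_mul,
            ← ENNReal.rpow_mul, he1, he2, hab, hac]
  have hsm : AEStronglyMeasurable (fun x ↦ ∫ y, f y * g (x - y)) volume := by
    have hsm2 : StronglyMeasurable (fun z : ℝ × ℝ ↦ f z.2 * g (z.1 - z.2)) :=
      ((hfm.comp measurable_snd).mul (hgm.comp measurable_sub)).stronglyMeasurable
    exact hsm2.integral_prod_right'.aestronglyMeasurable
  have hfin : A ^ (1 / p) * B ^ (1 / q) < ∞ :=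
    ENNReal.mul_lt_top (ENNReal.rpow_lt_top_of_nonneg (by positivity) hA_lt.ne)
      (ENNReal.rpow_lt_top_of_nonneg (by positivity) hB_lt.ne)
  refine ⟨hae_int, ⟨hsm, lt_of_le_of_lt hbound hfin⟩, ?_⟩
  rw [heLf, heLg]
  exact hbound

lemma comp_ae_eq {g g' : ℝ → ℂ} (hgg' : g =ᵐ[volume] g') {τ : ℝ → ℝ}
    (hτ : MeasurePreserving τ (volume : Measure ℝ) volume) :
    (fun y ↦ g (τ y)) =ᵐ[volume] fun y ↦ g' (τ y) :=
  ae_eq_comp hτ.measurable.aemeasurable (by rwa [hτ.map_eq])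

noncomputable def Hconv (f g : ℝ → ℂ) (x : ℝ) : ℂ :=
  (1 / (2 * Real.sqrt (2 * Real.pi))) *
    ∫ y : ℝ, f y * (g (x + y) + g (x - y) + g (-x + y) - g (-x - y))

theorem stmt5 (p q r : ℝ) (hp : 1 < p) (hq : 1 < q) (hr : 1 < r)
    (hpqr : 1 / p + 1 / q = 1 + 1 / r)
    (f g : ℝ → ℂ)
    (hf : MemLp f (ENNReal.ofReal p)) (hg : MemLp g (ENNReal.ofReal q)) :
    MemLp (Hconv f g) (ENNReal.ofReal r) ∧
      eLpNorm (Hconv f g) (ENNReal.ofReal r) volume ≤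
        ENNReal.ofReal (Real.sqrt (2 / Real.pi)) *
          eLpNorm f (ENNReal.ofReal p) volume * eLpNorm g (ENNReal.ofReal q) volume := by
  obtain ⟨f', hf'sm, hff'⟩ := hf.1
  obtain ⟨g', hg'sm, hgg'⟩ := hg.1
  have hf'm : Measurable f' := hf'sm.measurable
  have hg'm : Measurable g' := hg'sm.measurable
  have hf' : MemLp f' (ENNReal.ofReal p) := hf.ae_eq hff'
  have hg' : MemLp g' (ENNReal.ofReal q) := hg.ae_eq hgg'
  have heLf' : eLpNorm f' (ENNReal.ofReal p) volume = eLpNorm f (ENNReal.ofReal p) volume :=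
    eLpNorm_congr_ae hff'.symm
  have heLg' : eLpNorm g' (ENNReal.ofReal q) volume = eLpNorm g (ENNReal.ofReal q) volume :=
    eLpNorm_congr_ae hgg'.symm
  have mpneg : MeasurePreserving (Neg.neg : ℝ → ℝ) volume volume :=
    Measure.measurePreserving_neg _
  -- Hconv f g = Hconv f' g'
  have hEq : Hconv f g = Hconv f' g' := by
    funext x
    unfold Hconv
    congr 1
    refine integral_congr_ae (hff'.mul ?_)
    exact (((comp_ae_eq hgg' (measurePreserving_add_left volume x)).add
      (comp_ae_eq hgg' (Measure.measurePreserving_sub_left volume x))).add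
      (comp_ae_eq hgg' (measurePreserving_add_left volume (-x)))).sub
      (comp_ae_eq hgg' (Measure.measurePreserving_sub_left volume (-x)))
  have hf'neg : MemLp (f' ∘ Neg.neg) (ENNReal.ofReal p) := hf'.comp_measurePreserving mpneg
  have hf'negm : Measurable (f' ∘ Neg.neg) := hf'm.comp measurable_neg
  have heLfneg : eLpNorm (f' ∘ Neg.neg) (ENNReal.ofReal p) volume =
      eLpNorm f' (ENNReal.ofReal p) volume :=
    eLpNorm_comp_measurePreserving hf'.1 mpneg
  obtain ⟨S1, mem1, bnd1⟩ := young_aux p q r hp hq hr hpqr (f' ∘ Neg.neg) g' hf'negm hg'm hf'neg hg'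
  obtain ⟨S2, mem2, bnd2⟩ := young_aux p q r hp hq hr hpqr f' g' hf'm hg'm hf' hg'
  set h₁ : ℝ → ℂ := fun x ↦ ∫ y : ℝ, (f' ∘ Neg.neg) y * g' (x - y) with h₁_def
  set h₂ : ℝ → ℂ := fun x ↦ ∫ y : ℝ, f' y * g' (x - y) with h₂_def
  have mem3 : MemLp (h₁ ∘ Neg.neg) (ENNReal.ofReal r) := mem1.comp_measurePreserving mpneg
  have mem4 : MemLp (h₂ ∘ Neg.neg) (ENNReal.ofReal r) := mem2.comp_measurePreserving mpneg
  have bnd3 : eLpNorm (h₁ ∘ Neg.neg) (ENNReal.ofReal r) volume =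
      eLpNorm h₁ (ENNReal.ofReal r) volume := eLpNorm_comp_measurePreserving mem1.1 mpneg
  have bnd4 : eLpNorm (h₂ ∘ Neg.neg) (ENNReal.ofReal r) volume =
      eLpNorm h₂ (ENNReal.ofReal r) volume := eLpNorm_comp_measurePreserving mem2.1 mpneg
  -- pointwise identities
  have I₁ : ∀ x : ℝ, h₁ x = ∫ y : ℝ, f' y * g' (x + y) := by
    intro x
    have h := integral_neg_eq_self (fun z : ℝ ↦ f' z * g' (x + z)) (volume : Measure ℝ)
    rw [← h]
    refine integral_congr_ae (Filter.EventuallyEq.of_eq (funext fun y ↦ ?_))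
    simp [Function.comp, sub_eq_add_neg]
  -- integrability a.e.
  have S1' : ∀ᵐ x : ℝ, Integrable (fun y ↦ f' y * g' (x + y)) := by
    filter_upwards [S1] with x hx
    have h2 := ((mpneg.integrable_comp hx.1).mpr hx)
    have : ((fun y ↦ (f' ∘ Neg.neg) y * g' (x - y)) ∘ Neg.neg) =
        fun y ↦ f' y * g' (x + y) := by
      funext y; simp [Function.comp, sub_neg_eq_add]
    rwa [this] at h2
  have S3' : ∀ᵐ x : ℝ, Integrable (fun y ↦ f' y * g' (-x + y)) :=
    mpneg.quasiMeasurePreserving.ae S1'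
  have S4' : ∀ᵐ x : ℝ, Integrable (fun y ↦ f' y * g' (-x - y)) :=
    mpneg.quasiMeasurePreserving.ae S2
  -- the decomposition
  set C : ℂ := (1 / (2 * Real.sqrt (2 * Real.pi)) : ℂ) with hC_def
  set Htot : ℝ → ℂ := h₁ + h₂ + h₁ ∘ Neg.neg - h₂ ∘ Neg.neg with hHtot_def
  have heq : Hconv f' g' =ᵐ[volume] C • Htot := by
    filter_upwards [S1', S2, S3', S4'] with x i1 i2 i3 i4
    show Hconv f' g' x = C • Htot x
    unfold Hconv
    have hsplit : (fun y ↦ f' y * (g' (x + y) + g' (x - y) + g' (-x + y) - g' (-x - y))) =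
        fun y ↦ f' y * g' (x + y) + f' y * g' (x - y) + f' y * g' (-x + y) -
          f' y * g' (-x - y) := by
      funext y; ring
    have j12 : Integrable (fun y : ℝ ↦ f' y * g' (x + y) + f' y * g' (x - y)) volume :=
      i1.add i2
    have j123 : Integrable (fun y : ℝ ↦ f' y * g' (x + y) + f' y * g' (x - y) +
        f' y * g' (-x + y)) volume := j12.add i3
    rw [hsplit, integral_sub j123 i4, integral_add j12 i3, integral_add i1 i2]
    have e1 : h₁ x = ∫ y : ℝ, f' y * g' (x + y) := I₁ x
    have e3 : (h₁ ∘ Neg.neg) x = ∫ y : ℝ, f' y * g' (-x + y) := I₁ (-x)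
    have e2 : h₂ x = ∫ y : ℝ, f' y * g' (x - y) := rfl
    have e4 : (h₂ ∘ Neg.neg) x = ∫ y : ℝ, f' y * g' (-x - y) := rfl
    show _ = C * Htot x
    rw [hHtot_def]
    simp only [Pi.sub_apply, Pi.add_apply, e1, e2, e3, e4]
    try ring
  -- MemLp
  have memTot : MemLp Htot (ENNReal.ofReal r) := ((mem1.add mem2).add mem3).sub mem4
  have memH : MemLp (Hconv f g) (ENNReal.ofReal r) := by
    rw [hEq]
    exact (memTot.const_smul C).ae_eq heq.symm
  refine ⟨memH, ?_⟩
  -- norm bound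
  have hor1 : (1 : ENNReal) ≤ ENNReal.ofReal r := ENNReal.one_le_ofReal.mpr hr.le
  set N : ENNReal := eLpNorm f (ENNReal.ofReal p) volume * eLpNorm g (ENNReal.ofReal q) volume
    with hN_def
  have b1 : eLpNorm h₁ (ENNReal.ofReal r) volume ≤ N := by
    rw [hN_def, ← heLf', ← heLg', ← heLfneg]; exact bnd1
  have b2 : eLpNorm h₂ (ENNReal.ofReal r) volume ≤ N := by
    rw [hN_def, ← heLf', ← heLg']; exact bnd2
  have btot : eLpNorm Htot (ENNReal.ofReal r) volume ≤ N + N + N + N := by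
    rw [hHtot_def]
    calc eLpNorm (h₁ + h₂ + h₁ ∘ Neg.neg - h₂ ∘ Neg.neg) (ENNReal.ofReal r) volume
        ≤ eLpNorm (h₁ + h₂ + h₁ ∘ Neg.neg) (ENNReal.ofReal r) volume +
          eLpNorm (h₂ ∘ Neg.neg) (ENNReal.ofReal r) volume :=
          eLpNorm_sub_le ((mem1.add mem2).add mem3).1 mem4.1 hor1
      _ ≤ (eLpNorm (h₁ + h₂) (ENNReal.ofReal r) volume +
          eLpNorm (h₁ ∘ Neg.neg) (ENNReal.ofReal r) volume) +
          eLpNorm (h₂ ∘ Neg.neg) (ENNReal.ofReal r) volume := by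
          gcongr
          exact eLpNorm_add_le (mem1.add mem2).1 mem3.1 hor1
      _ ≤ ((eLpNorm h₁ (ENNReal.ofReal r) volume + eLpNorm h₂ (ENNReal.ofReal r) volume) +
          eLpNorm (h₁ ∘ Neg.neg) (ENNReal.ofReal r) volume) +
          eLpNorm (h₂ ∘ Neg.neg) (ENNReal.ofReal r) volume := by
          gcongr
          exact eLpNorm_add_le mem1.1 mem2.1 hor1
      _ ≤ N + N + N + N := by
          rw [bnd3, bnd4]
          gcongr
  -- constant computation
  have hs : (0:ℝ) < Real.sqrt (2 * Real.pi) := Real.sqrt_pos.mpr (by positivity)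
  have hCnorm : (‖C‖₊ : ENNReal) = ENNReal.ofReal (1 / (2 * Real.sqrt (2 * Real.pi))) := by
    have : C = ((1 / (2 * Real.sqrt (2 * Real.pi)) : ℝ) : ℂ) := by
      rw [hC_def]; push_cast; ring
    rw [this]
    rw [show (‖((1 / (2 * Real.sqrt (2 * Real.pi)) : ℝ) : ℂ)‖₊ : NNReal) =
      ‖(1 / (2 * Real.sqrt (2 * Real.pi)) : ℝ)‖₊ by simp]
    exact Real.enorm_eq_ofReal (by positivity)
  have hconst : (‖C‖₊ : ENNReal) * (N + N + N + N) =
      ENNReal.ofReal (Real.sqrt (2 / Real.pi)) * N := by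
    have h4 : N + N + N + N = (ENNReal.ofReal 4) * N := by
      rw [show ENNReal.ofReal 4 = 4 by simp [ENNReal.ofReal_ofNat]]
      ring
    rw [h4, ← mul_assoc, hCnorm, ← ENNReal.ofReal_mul (by positivity)]
    congr 1
    have hmul : Real.sqrt (2 / Real.pi) * Real.sqrt (2 * Real.pi) = 2 := by
      rw [← Real.sqrt_mul (by positivity)]
      rw [show (2 / Real.pi) * (2 * Real.pi) = 4 by field_simp; ring]
      rw [show (4:ℝ) = 2 ^ 2 by norm_num, Real.sqrt_sq (by norm_num)]
    have h2s : Real.sqrt (2 / Real.pi) = 2 / Real.sqrt (2 * Real.pi) := by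
      rw [eq_div_iff hs.ne']
      exact hmul
    rw [h2s]
    field_simp
    try ring
  -- finish
  calc eLpNorm (Hconv f g) (ENNReal.ofReal r) volume
      = eLpNorm (C • Htot) (ENNReal.ofReal r) volume := by
        rw [hEq]; exact eLpNorm_congr_ae heq
    _ = (‖C‖₊ : ENNReal) * eLpNorm Htot (ENNReal.ofReal r) volume :=
        eLpNorm_const_smul C Htot _ _
    _ ≤ (‖C‖₊ : ENNReal) * (N + N + N + N) := by gcongr
    _ = ENNReal.ofReal (Real.sqrt (2 / Real.pi)) * N := hconst
    _ = ENNReal.ofReal (Real.sqrt (2 / Real.pi)) * eLpNorm f (ENNReal.ofReal p) volume *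
        eLpNorm g (ENNReal.ofReal q) volume := by rw [hN_def, mul_assoc]
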